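/- For any convex function φ : ℝ → ℝ and any nonnegative-integer-valued random variable N with E[N] = c, one has E[φ(N)] ≥ (⌈c⌉ - c)·φ(⌊c⌋) + (c - ⌊c⌋)·φ(⌈c⌉). (When c is an integer this right-hand side equals φ(c).) -/
import Mathlib

lemma convex_chord_ext {φ : ℝ → ℝ} (hφ : ConvexOn ℝ Set.univ φ) (m n : ℕ) :
    φ m + (φ (m + 1) - φ m) * ((n : ℝ) - m) ≤ φ n := by
  rcases lt_trichotomy n m with h | h | h
  · have hn : (n : ℝ) < m := by exact_mod_cast h
    have := hφ.secant_mono (a := (m : ℝ)) (x := (n : ℝ)) (y := (m : ℝ) + 1)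
      trivial trivial trivial (by push_cast; linarith) (by linarith) (by linarith)
    have hd : (n : ℝ) - m < 0 := by linarith
    simp only [add_sub_cancel_left, div_one] at this
    rw [div_le_iff_of_neg hd] at this
    linarith
  · subst h; simp
  · have hn : (m : ℝ) + 1 ≤ n := by exact_mod_cast h
    have := hφ.secant_mono (a := (m : ℝ)) (x := (m : ℝ) + 1) (y := (n : ℝ))
      trivial trivial trivial (by linarith) (by push_cast; linarith) (by linarith)
    rw [div_le_div_iff₀ (by linarith) (by linarith)] at this
    nlinarith [this]

/-- Jensen-type bound: for convex `φ` and a nonnegative-integer-valued random variable `N`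
with mean `c`, `E[φ(N)] ≥ (⌈c⌉ - c)·φ(⌊c⌋) + (c - ⌊c⌋)·φ(⌈c⌉)`, where the right-hand side
is the linear interpolation of `φ` between `⌊c⌋` and `⌊c⌋ + 1` evaluated at `c`
(which equals `φ(c)` when `c` is an integer). -/
theorem convex_interpolation_lower_bound
    (φ : ℝ → ℝ) (hφ : ConvexOn ℝ Set.univ φ) (c : ℝ) (hc : 0 ≤ c)
    (f : ℕ → ℝ) (hf : ∀ n, 0 ≤ f n) (hsum : ∑' n : ℕ, f n = 1)
    (hmean_summable : Summable (fun n : ℕ => (n : ℝ) * f n))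
    (hmean : ∑' n : ℕ, (n : ℝ) * f n = c)
    (hφ_summable : Summable (fun n : ℕ => f n * φ n)) :
    (1 - (c - ⌊c⌋₊)) * φ ⌊c⌋₊ + (c - ⌊c⌋₊) * φ (⌊c⌋₊ + 1)
      ≤ ∑' n : ℕ, f n * φ n := by
  have sf : Summable f := by
    by_contra h
    rw [tsum_eq_zero_of_not_summable h] at hsum
    norm_num at hsum
  set m : ℕ := ⌊c⌋₊
  set β : ℝ := φ (m + 1) - φ m with hβ
  set A : ℝ := φ m - β * m with hA
  have hsummable : Summable (fun n : ℕ => A * f n + β * ((n : ℝ) * f n)) :=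
    (sf.mul_left A).add (hmean_summable.mul_left β)
  have hle : ∀ n : ℕ, A * f n + β * ((n : ℝ) * f n) ≤ f n * φ n := by
    intro n
    have key := convex_chord_ext hφ m n
    have h1 : A * f n + β * ((n : ℝ) * f n) = f n * (φ m + β * ((n : ℝ) - m)) := by ring
    rw [h1]
    exact mul_le_mul_of_nonneg_left key (hf n)
  have htsum : ∑' n : ℕ, (A * f n + β * ((n : ℝ) * f n)) = A + β * c := by
    rw [Summable.tsum_add (sf.mul_left A) (hmean_summable.mul_left β), tsum_mul_left, tsum_mul_left,
      hsum, hmean, mul_one]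
  have := Summable.tsum_le_tsum hle hsummable hφ_summable
  rw [htsum] at this
  have heq : (1 - (c - (m : ℝ))) * φ m + (c - m) * φ (m + 1) = A + β * c := by
    rw [hA, hβ]; push_cast; ring
  push_cast at heq ⊢
  linarith
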